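/- arXiv:2202.04796 — 2 statements merged into one kernel-verified Lean document; each statement's English description precedes it below -/
import Mathlib

section
/- (Hoeffding inequality for U-statistics.) Suppose 0 < μ < 1. Then for every x ∈ (0,1), P( U ≤ x ) ≤ exp( −m · h₁( min(x,μ) ; μ ) ), where h₁(y; μ) = y·log(y/μ) + (1−y)·log((1−y)/(1−μ)) for y ∈ (0,1), extended by h₁(0;μ) = log(1/(1−μ)) and h₁(1;μ) = log(1/μ). -/
set_option linter.unusedSectionVars false


open MeasureTheory ProbabilityTheory

/-- Tuples of `k` pairwise distinct indices from `Fin m`, i.e. injections `Fin k → Fin m`. -/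
abbrev TransferUQ.Tup (k m : ℕ) := {g : Fin k → Fin m // Function.Injective g}

/-- The U-statistic of degree `k` with kernel `φ`, evaluated at the sample path `ω`:
`U = ((n-k)!/n!) ∑_{(i_1,…,i_k) ∈ 𝕋_{k,n}} φ(Z_{i_1},…,Z_{i_k})`. -/
noncomputable def TransferUQ.Ustat {Ω 𝒵 : Type*} (n k : ℕ) (φ : (Fin k → 𝒵) → ℝ)
    (Z : Fin n → Ω → 𝒵) (ω : Ω) : ℝ :=
  ((n - k).factorial : ℝ) / (n.factorial : ℝ) *
    ∑ g : TransferUQ.Tup k n, φ (fun i => Z (g.val i) ω)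

/-- The Kullback–Leibler-type function `h₁(y;μ) = y log(y/μ) + (1-y) log((1-y)/(1-μ))`,
extended by the conventions `h₁(0;μ) = log(1/(1-μ))` and `h₁(1;μ) = log(1/μ)`. -/
noncomputable def TransferUQ.h1 (y μ : ℝ) : ℝ :=
  if y = 0 then Real.log (1 / (1 - μ))
  else if y = 1 then Real.log (1 / μ)
  else y * Real.log (y / μ) + (1 - y) * Real.log ((1 - y) / (1 - μ))

section AuxMeasure
variable {𝒵 : Type*} [MeasurableSpace 𝒵]

lemma auxUQ_measurable_comp_right {a b : ℕ} (g : Fin a → Fin b) :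
    Measurable (fun x : Fin b → 𝒵 => x ∘ g) :=
  measurable_pi_lambda _ fun i => measurable_pi_apply (g i)

lemma auxUQ_map_pi_comp (ν : Measure 𝒵) [IsProbabilityMeasure ν] {a b : ℕ}
    {g : Fin a → Fin b} (hg : Function.Injective g) :
    (Measure.pi fun _ : Fin b => ν).map (fun x => x ∘ g) = Measure.pi (fun _ : Fin a => ν) := by
  classical
  refine (Measure.pi_eq fun s hs => ?_).symm
  rw [Measure.map_apply (auxUQ_measurable_comp_right g) (MeasurableSet.univ_pi hs)]
  have hpre : (fun x : Fin b → 𝒵 => x ∘ g) ⁻¹' Set.univ.pi s =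
      Set.univ.pi (fun j => if h : ∃ i, g i = j then s h.choose else Set.univ) := by
    ext x
    simp only [Set.mem_preimage, Set.mem_univ_pi, Function.comp_apply]
    constructor
    · intro hx j
      split_ifs with h
      · have hc := h.choose_spec
        have h2 := hx h.choose
        rwa [hc] at h2
      · trivial
    · intro hx i
      have h : ∃ i', g i' = g i := ⟨i, rfl⟩
      have := hx (g i)
      rw [dif_pos h] at this
      rwa [hg h.choose_spec] at this
  rw [hpre, Measure.pi_pi]
  have h1 : ∀ j ∈ Finset.univ, j ∉ Finset.image g Finset.univ →
      ν (if h : ∃ i, g i = j then s h.choose else Set.univ) = 1 := by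
    intro j _ hj
    rw [dif_neg, measure_univ]
    rintro ⟨i, rfl⟩
    exact hj (Finset.mem_image_of_mem g (Finset.mem_univ i))
  rw [← Finset.prod_subset (Finset.subset_univ (Finset.image g Finset.univ)) h1,
      Finset.prod_image (fun i _ j _ hij => hg hij)]
  refine Finset.prod_congr rfl fun i _ => ?_
  have h : ∃ i', g i' = g i := ⟨i, rfl⟩
  rw [dif_pos h, hg h.choose_spec]

variable {Ω : Type*} [MeasurableSpace Ω] {P : Measure Ω} [IsProbabilityMeasure P]
  {ν : Measure 𝒵} [IsProbabilityMeasure ν] {n : ℕ}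
  {Z : Fin n → Ω → 𝒵}

lemma auxUQ_joint_law (hZmeas : ∀ i, Measurable (Z i))
    (hindep : iIndepFun Z P)
    (hlaw : ∀ i, P.map (Z i) = ν) :
    P.map (fun ω (i : Fin n) => Z i ω) = Measure.pi (fun _ : Fin n => ν) := by
  refine (Measure.pi_eq fun s hs => ?_).symm
  have hmeas : Measurable fun ω (i : Fin n) => Z i ω := measurable_pi_lambda _ hZmeas
  rw [Measure.map_apply hmeas (MeasurableSet.univ_pi hs)]
  have hpre : (fun ω (i : Fin n) => Z i ω) ⁻¹' Set.univ.pi s = ⋂ i, Z i ⁻¹' s i := by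
    ext ω
    simp [Set.mem_iInter]
  rw [hpre, hindep.meas_iInter (fun i => ⟨s i, hs i, rfl⟩)]
  exact Finset.prod_congr rfl fun i _ => by
    rw [← hlaw i, Measure.map_apply (hZmeas i) (hs i)]

lemma auxUQ_vec_law (hZmeas : ∀ i, Measurable (Z i))
    (hindep : iIndepFun Z P)
    (hlaw : ∀ i, P.map (Z i) = ν) {a : ℕ} {g : Fin a → Fin n} (hg : Function.Injective g) :
    P.map (fun ω (i : Fin a) => Z (g i) ω) = Measure.pi (fun _ : Fin a => ν) := by
  have h1 := auxUQ_joint_law hZmeas hindep hlaw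
  have h2 : (fun ω (i : Fin a) => Z (g i) ω)
      = (fun x : Fin n → 𝒵 => x ∘ g) ∘ (fun ω i => Z i ω) := rfl
  rw [h2, ← Measure.map_map (auxUQ_measurable_comp_right g) (measurable_pi_lambda _ hZmeas), h1,
    auxUQ_map_pi_comp ν hg]

lemma auxUQ_transfer (hZmeas : ∀ i, Measurable (Z i))
    (hindep : iIndepFun Z P)
    (hlaw : ∀ i, P.map (Z i) = ν) {a : ℕ} {g : Fin a → Fin n} (hg : Function.Injective g)
    {F : (Fin a → 𝒵) → ℝ} (hF : Measurable F) :
    ∫ ω, F (fun i => Z (g i) ω) ∂P = ∫ x, F x ∂(Measure.pi fun _ : Fin a => ν) := by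
  rw [← auxUQ_vec_law hZmeas hindep hlaw hg,
    integral_map (measurable_pi_lambda _ fun i => hZmeas (g i)).aemeasurable
      hF.aestronglyMeasurable]

end AuxMeasure

section AuxPerm

lemma auxUQ_exists_perm {n k : ℕ} {e g : Fin k → Fin n} (he : Function.Injective e)
    (hg : Function.Injective g) : ∃ σ : Equiv.Perm (Fin n), ∀ i, σ (e i) = g i := by
  classical
  let E : {x // x ∈ Set.range e} ≃ {x // x ∈ Set.range g} :=
    (Equiv.ofInjective e he).symm.trans (Equiv.ofInjective g hg)
  refine ⟨E.extendSubtype, fun i => ?_⟩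
  rw [E.extendSubtype_apply_of_mem (e i) ⟨i, rfl⟩]
  have h1 : (Equiv.ofInjective e he).symm ⟨e i, ⟨i, rfl⟩⟩ = i := by
    apply he
    simp [Equiv.apply_ofInjective_symm he]
  simp only [E, Equiv.trans_apply, h1, Equiv.ofInjective_apply]

lemma auxUQ_card_tup (k n : ℕ) :
    Fintype.card (TransferUQ.Tup k n) = n.descFactorial k := by
  rw [Fintype.card_congr (Equiv.subtypeInjectiveEquivEmbedding (Fin k) (Fin n)),
    Fintype.card_embedding_eq, Fintype.card_fin, Fintype.card_fin]

lemma auxUQ_perm_sum {n k : ℕ} (hkn : k ≤ n) {e : Fin k → Fin n} (he : Function.Injective e)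
    (F : TransferUQ.Tup k n → ℝ) :
    ∑ σ : Equiv.Perm (Fin n), F ⟨σ ∘ e, σ.injective.comp he⟩
      = ((n - k).factorial : ℝ) * ∑ g : TransferUQ.Tup k n, F g := by
  classical
  set Φ : Equiv.Perm (Fin n) → TransferUQ.Tup k n :=
    fun σ => ⟨σ ∘ e, σ.injective.comp he⟩ with hΦ
  have hext : ∀ g : TransferUQ.Tup k n, ∃ σ, Φ σ = g := by
    intro g
    obtain ⟨σ, hσ⟩ := auxUQ_exists_perm he g.2
    exact ⟨σ, Subtype.ext (funext fun i => hσ i)⟩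
  have hfib : ∀ g g' : TransferUQ.Tup k n,
      (Finset.univ.filter fun σ => Φ σ = g).card
        = (Finset.univ.filter fun σ => Φ σ = g').card := by
    intro g g'
    obtain ⟨σg, hσg⟩ := hext g
    obtain ⟨σg', hσg'⟩ := hext g'
    apply Finset.card_bij' (fun σ _ => σg' * σg⁻¹ * σ) (fun σ _ => σg * σg'⁻¹ * σ)
    · intro σ hσ
      simp only [Finset.mem_filter, Finset.mem_univ, true_and] at hσ ⊢
      refine Subtype.ext (funext fun i => ?_)
      have h1 : σ (e i) = g.1 i := congrFun (congrArg Subtype.val hσ) i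
      have h2 : σg (e i) = g.1 i := congrFun (congrArg Subtype.val hσg) i
      have h3 : σg' (e i) = g'.1 i := congrFun (congrArg Subtype.val hσg') i
      show σg' (σg⁻¹ (σ (e i))) = g'.1 i
      rw [h1, ← h2, Equiv.Perm.inv_def, Equiv.symm_apply_apply, h3]
    · intro σ hσ
      simp only [Finset.mem_filter, Finset.mem_univ, true_and] at hσ ⊢
      refine Subtype.ext (funext fun i => ?_)
      have h1 : σ (e i) = g'.1 i := congrFun (congrArg Subtype.val hσ) i
      have h2 : σg (e i) = g.1 i := congrFun (congrArg Subtype.val hσg) i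
      have h3 : σg' (e i) = g'.1 i := congrFun (congrArg Subtype.val hσg') i
      show σg (σg'⁻¹ (σ (e i))) = g.1 i
      rw [h1, ← h3, Equiv.Perm.inv_def, Equiv.symm_apply_apply, h2]
    · intro σ _
      simp [mul_assoc]
    · intro σ _
      simp [mul_assoc]
  have hcount : ∀ g : TransferUQ.Tup k n,
      (Finset.univ.filter fun σ => Φ σ = g).card = (n - k).factorial := by
    intro g
    have hsum : ∑ g' : TransferUQ.Tup k n, (Finset.univ.filter fun σ => Φ σ = g').card
        = n.factorial := by
      rw [show n.factorial = Fintype.card (Equiv.Perm (Fin n)) by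
          rw [Fintype.card_perm, Fintype.card_fin],
        ← Finset.card_univ,
        Finset.card_eq_sum_card_fiberwise (f := Φ) (t := Finset.univ)
          (fun σ _ => Finset.mem_univ _)]
    have hconst : ∑ g' : TransferUQ.Tup k n, (Finset.univ.filter fun σ => Φ σ = g').card
        = Fintype.card (TransferUQ.Tup k n) * (Finset.univ.filter fun σ => Φ σ = g).card := by
      rw [Finset.sum_congr rfl (fun g' _ => hfib g' g), Finset.sum_const, Finset.card_univ,
        smul_eq_mul]
    have hcard := auxUQ_card_tup k n
    have hfact := Nat.factorial_mul_descFactorial hkn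
    have hpos : 0 < Fintype.card (TransferUQ.Tup k n) := by
      rw [hcard]
      rcases Nat.eq_zero_or_pos (n.descFactorial k) with h | h
      · exact absurd (Nat.descFactorial_eq_zero_iff_lt.mp h) (by omega)
      · exact h
    have : Fintype.card (TransferUQ.Tup k n) * (Finset.univ.filter fun σ => Φ σ = g).card
        = Fintype.card (TransferUQ.Tup k n) * (n - k).factorial := by
      rw [← hconst, hsum, ← hfact, hcard, Nat.mul_comm]
    exact Nat.eq_of_mul_eq_mul_left hpos this
  calc ∑ σ : Equiv.Perm (Fin n), F (Φ σ)
      = ∑ g : TransferUQ.Tup k n, ∑ σ ∈ Finset.univ.filter fun σ => Φ σ = g, F (Φ σ) := by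
        rw [Finset.sum_fiberwise_of_maps_to (fun σ _ => Finset.mem_univ (Φ σ))]
    _ = ∑ g : TransferUQ.Tup k n, ((n - k).factorial : ℝ) * F g := by
        refine Finset.sum_congr rfl fun g _ => ?_
        rw [Finset.sum_congr rfl (fun σ hσ => by
          rw [(Finset.mem_filter.mp hσ).2]), Finset.sum_const, hcount g, nsmul_eq_mul]
    _ = ((n - k).factorial : ℝ) * ∑ g : TransferUQ.Tup k n, F g := by
        rw [Finset.mul_sum]

end AuxPerm

set_option maxHeartbeats 1000000 in
/-- **Hoeffding inequality for U-statistics.** If `Z_1,…,Z_n` are i.i.d., `φ` takes values in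
`[0,1]`, `U` is the U-statistic of degree `k` with kernel `φ`, `μ = E[U] ∈ (0,1)` and
`m = ⌊n/k⌋`, then `P(U ≤ x) ≤ exp(−m·h₁(min(x,μ); μ))` for all `x ∈ (0,1)`. -/
theorem ustatistic_hoeffding
    {Ω : Type*} [MeasurableSpace Ω] (P : Measure Ω) [IsProbabilityMeasure P]
    {𝒵 : Type*} [MeasurableSpace 𝒵] (ν : Measure 𝒵) [IsProbabilityMeasure ν]
    (n k : ℕ) (hk : 1 ≤ k) (hkn : k ≤ n)
    (Z : Fin n → Ω → 𝒵) (hZmeas : ∀ i, Measurable (Z i))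
    (hindep : iIndepFun Z P)
    (hlaw : ∀ i, P.map (Z i) = ν)
    (φ : (Fin k → 𝒵) → ℝ) (hφmeas : Measurable φ) (hφ01 : ∀ v, φ v ∈ Set.Icc (0:ℝ) 1)
    (hμ : (∫ ω, TransferUQ.Ustat n k φ Z ω ∂P) ∈ Set.Ioo (0:ℝ) 1)
    (x : ℝ) (hx : x ∈ Set.Ioo (0:ℝ) 1) :
    P {ω | TransferUQ.Ustat n k φ Z ω ≤ x} ≤
      ENNReal.ofReal (Real.exp (-((n / k : ℕ) : ℝ) *
        TransferUQ.h1 (min x (∫ ω, TransferUQ.Ustat n k φ Z ω ∂P))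
          (∫ ω, TransferUQ.Ustat n k φ Z ω ∂P))) := by
  classical
  set U := TransferUQ.Ustat n k φ Z with hUdef
  set μ0 := ∫ ω, U ω ∂P with hμ0def
  obtain ⟨hμ0pos, hμ0lt⟩ := hμ
  obtain ⟨hxpos, hxlt⟩ := hx
  set m := n / k with hmdef
  have hk0 : 0 < k := hk
  have hm1 : 1 ≤ m := (Nat.one_le_div_iff hk0).mpr hkn
  have hmk : m * k ≤ n := Nat.div_mul_le_self n k
  -- blocks
  have hblt : ∀ (j : Fin m) (i : Fin k), j.1 * k + i.1 < n := by
    intro j i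
    have hj := j.2
    have hi := i.2
    have h1 : (j.1 + 1) * k ≤ m * k := Nat.mul_le_mul_right k j.2
    rw [add_mul, one_mul] at h1
    omega
  set b : Fin m → Fin k → Fin n := fun j i => ⟨j.1 * k + i.1, hblt j i⟩ with hbdef
  have hbinj : ∀ j, Function.Injective (b j) := by
    intro j i i' h
    have hv : j.1 * k + i.1 = j.1 * k + i'.1 := congrArg Fin.val h
    exact Fin.ext (by omega)
  have hbdisj : ∀ (j j' : Fin m) (i i' : Fin k), b j i = b j' i' → j = j' := by
    intro j j' i i' h
    have hv : j.1 * k + i.1 = j'.1 * k + i'.1 := congrArg Fin.val h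
    by_contra hne
    have hne' : j.1 ≠ j'.1 := fun hh => hne (Fin.ext hh)
    rcases Nat.lt_or_ge j.1 j'.1 with hlt | hge
    · have h1 : (j.1 + 1) * k ≤ j'.1 * k := Nat.mul_le_mul_right k hlt
      have hik := i.2
      rw [add_mul, one_mul] at h1
      omega
    · have hlt : j'.1 < j.1 := by omega
      have h1 : (j'.1 + 1) * k ≤ j.1 * k := Nat.mul_le_mul_right k hlt
      have hik := i'.2
      rw [add_mul, one_mul] at h1
      omega
  -- measurability and bounds
  have hvecmeas : ∀ {a : ℕ} (g : Fin a → Fin n),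
      Measurable (fun ω => (fun i => Z (g i) ω)) :=
    fun g => measurable_pi_lambda _ fun i => hZmeas (g i)
  have hWmeas : ∀ j : Fin m, Measurable (fun ω => φ (fun i => Z (b j i) ω)) :=
    fun j => hφmeas.comp (hvecmeas (b j))
  have hφZgmeas : ∀ g : TransferUQ.Tup k n, Measurable (fun ω => φ (fun i => Z (g.1 i) ω)) :=
    fun g => hφmeas.comp (hvecmeas g.1)
  have hUmeas : Measurable U := by
    rw [hUdef]
    unfold TransferUQ.Ustat
    exact (Finset.measurable_sum _ (fun g _ => hφZgmeas g)).const_mul _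
  have hnfac_ne : (n.factorial : ℝ) ≠ 0 := Nat.cast_ne_zero.mpr n.factorial_ne_zero
  have hcnk1 : ((n - k).factorial : ℝ) / (n.factorial : ℝ)
      * (Fintype.card (TransferUQ.Tup k n) : ℝ) = 1 := by
    rw [auxUQ_card_tup, div_mul_eq_mul_div, ← Nat.cast_mul,
      Nat.factorial_mul_descFactorial hkn, div_self hnfac_ne]
  have hU01 : ∀ ω, 0 ≤ U ω ∧ U ω ≤ 1 := by
    intro ω
    have hcnk_nonneg : (0:ℝ) ≤ ((n - k).factorial : ℝ) / (n.factorial : ℝ) := by positivity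
    constructor
    · exact mul_nonneg hcnk_nonneg
        (Finset.sum_nonneg fun g _ => (hφ01 _).1)
    · calc U ω ≤ ((n - k).factorial : ℝ) / (n.factorial : ℝ)
            * (Fintype.card (TransferUQ.Tup k n) : ℝ) := by
            refine mul_le_mul_of_nonneg_left ?_ hcnk_nonneg
            calc ∑ g : TransferUQ.Tup k n, φ (fun i => Z (g.1 i) ω)
                ≤ ∑ _g : TransferUQ.Tup k n, (1:ℝ) :=
                  Finset.sum_le_sum fun g _ => (hφ01 _).2
              _ = (Fintype.card (TransferUQ.Tup k n) : ℝ) := by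
                  rw [Finset.sum_const, Finset.card_univ, nsmul_eq_mul, mul_one]
        _ = 1 := hcnk1
  -- integrability helper
  have hexpInt : ∀ (a C : ℝ) (f : Ω → ℝ), Measurable f → (∀ ω, |f ω| ≤ C) →
      Integrable (fun ω => Real.exp (a * f ω)) P := by
    intro a C f hf hb
    refine ⟨((hf.const_mul a).exp).aestronglyMeasurable,
      HasFiniteIntegral.of_bounded (C := Real.exp (|a| * C)) (ae_of_all _ fun ω => ?_)⟩
    rw [Real.norm_eq_abs, Real.abs_exp]
    apply Real.exp_le_exp.mpr
    calc a * f ω ≤ |a * f ω| := le_abs_self _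
      _ = |a| * |f ω| := abs_mul _ _
      _ ≤ |a| * C := mul_le_mul_of_nonneg_left (hb ω) (abs_nonneg a)
  have hInt01 : ∀ (f : Ω → ℝ), Measurable f → (∀ ω, 0 ≤ f ω ∧ f ω ≤ 1) →
      Integrable f P := by
    intro f hf hb
    refine ⟨hf.aestronglyMeasurable,
      HasFiniteIntegral.of_bounded (C := 1) (ae_of_all _ fun ω => ?_)⟩
    rw [Real.norm_eq_abs, abs_le]
    exact ⟨by linarith [(hb ω).1], (hb ω).2⟩
  -- the measure πk and the kernel mean
  set πk := (Measure.pi fun _ : Fin k => ν) with hπkdef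
  set c := ∫ v, φ v ∂πk with hcdef
  have hμ0c : μ0 = c := by
    have h1 : ∀ g : TransferUQ.Tup k n, ∫ ω, φ (fun i => Z (g.1 i) ω) ∂P = c :=
      fun g => auxUQ_transfer hZmeas hindep hlaw g.2 hφmeas
    rw [hμ0def, hUdef]
    unfold TransferUQ.Ustat
    rw [integral_const_mul, integral_finset_sum _
      (fun g _ => hInt01 _ (hφZgmeas g) (fun ω => ⟨(hφ01 _).1, (hφ01 _).2⟩))]
    rw [Finset.sum_congr rfl (fun g _ => h1 g), Finset.sum_const, Finset.card_univ,
      nsmul_eq_mul, ← mul_assoc, hcnk1, one_mul]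
  -- the function G and permutation identity
  set G : (Fin n → 𝒵) → ℝ := fun y => ∑ j : Fin m, φ (fun i => y (b j i)) with hGdef
  have hGmeas : Measurable G :=
    Finset.measurable_sum _ (fun j _ =>
      hφmeas.comp (measurable_pi_lambda _ fun i => measurable_pi_apply (b j i)))
  have hGbound : ∀ y, |G y| ≤ (m : ℝ) := by
    intro y
    rw [abs_le]
    constructor
    · have : (0:ℝ) ≤ G y := Finset.sum_nonneg fun j _ => (hφ01 _).1
      have hm0 : (0:ℝ) ≤ (m:ℝ) := Nat.cast_nonneg m
      linarith
    · calc G y ≤ ∑ _j : Fin m, (1:ℝ) := Finset.sum_le_sum fun j _ => (hφ01 _).2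
        _ = (m : ℝ) := by
            rw [Finset.sum_const, Finset.card_univ, Fintype.card_fin, nsmul_eq_mul, mul_one]
  have hperm : ∀ ω, ∑ σ : Equiv.Perm (Fin n), G (fun i => Z (σ i) ω)
      = (m : ℝ) * (n.factorial : ℝ) * U ω := by
    intro ω
    have h1 : ∀ j : Fin m, ∑ σ : Equiv.Perm (Fin n), φ (fun i => Z (σ (b j i)) ω)
        = ((n - k).factorial : ℝ) * ∑ g : TransferUQ.Tup k n, φ (fun i => Z (g.1 i) ω) :=
      fun j => auxUQ_perm_sum hkn (hbinj j) (fun g => φ (fun i => Z (g.1 i) ω))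
    calc ∑ σ : Equiv.Perm (Fin n), G (fun i => Z (σ i) ω)
        = ∑ σ : Equiv.Perm (Fin n), ∑ j : Fin m, φ (fun i => Z (σ (b j i)) ω) := rfl
      _ = ∑ j : Fin m, ∑ σ : Equiv.Perm (Fin n), φ (fun i => Z (σ (b j i)) ω) :=
          Finset.sum_comm
      _ = ∑ _j : Fin m, ((n - k).factorial : ℝ)
            * ∑ g : TransferUQ.Tup k n, φ (fun i => Z (g.1 i) ω) :=
          Finset.sum_congr rfl fun j _ => h1 j
      _ = (m : ℝ) * (((n - k).factorial : ℝ)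
            * ∑ g : TransferUQ.Tup k n, φ (fun i => Z (g.1 i) ω)) := by
          rw [Finset.sum_const, Finset.card_univ, Fintype.card_fin, nsmul_eq_mul]
      _ = (m : ℝ) * (n.factorial : ℝ) * U ω := by
          rw [hUdef]
          unfold TransferUQ.Ustat
          field_simp
  -- Jensen pointwise
  have hJensen : ∀ (t : ℝ) (ω : Ω), Real.exp ((m : ℝ) * t * U ω)
      ≤ ∑ σ : Equiv.Perm (Fin n),
          (n.factorial : ℝ)⁻¹ * Real.exp (t * G (fun i => Z (σ i) ω)) := by
    intro t ω
    have hw : ∑ _σ : Equiv.Perm (Fin n), (n.factorial : ℝ)⁻¹ = 1 := by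
      rw [Finset.sum_const, Finset.card_univ, Fintype.card_perm, Fintype.card_fin,
        nsmul_eq_mul, mul_inv_cancel₀ hnfac_ne]
    have h := convexOn_exp.map_sum_le (t := Finset.univ)
      (w := fun _ : Equiv.Perm (Fin n) => (n.factorial : ℝ)⁻¹)
      (p := fun σ => t * G (fun i => Z (σ i) ω))
      (fun _ _ => by positivity) hw (fun _ _ => Set.mem_univ _)
    have harg : ∑ σ : Equiv.Perm (Fin n),
        (n.factorial : ℝ)⁻¹ • (t * G (fun i => Z (σ i) ω)) = (m : ℝ) * t * U ω := by
      calc ∑ σ : Equiv.Perm (Fin n), (n.factorial : ℝ)⁻¹ • (t * G (fun i => Z (σ i) ω))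
          = (n.factorial : ℝ)⁻¹ * t * ∑ σ : Equiv.Perm (Fin n), G (fun i => Z (σ i) ω) := by
            rw [Finset.mul_sum]
            exact Finset.sum_congr rfl fun σ _ => by rw [smul_eq_mul, mul_assoc]
        _ = (n.factorial : ℝ)⁻¹ * t * ((m : ℝ) * (n.factorial : ℝ) * U ω) := by rw [hperm ω]
        _ = (m : ℝ) * t * U ω := by field_simp
    rw [harg] at h
    simpa only [smul_eq_mul] using h
  -- Step 1: Jensen + equidistribution
  have hstep1 : ∀ t : ℝ, ∫ ω, Real.exp ((m : ℝ) * t * U ω) ∂P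
      ≤ ∫ ω, Real.exp (t * ∑ j : Fin m, φ (fun i => Z (b j i) ω)) ∂P := by
    intro t
    have hGσmeas : ∀ σ : Equiv.Perm (Fin n),
        Measurable (fun ω => G (fun i => Z (σ i) ω)) :=
      fun σ => hGmeas.comp (hvecmeas (fun i => σ i))
    have hGσint : ∀ σ : Equiv.Perm (Fin n),
        Integrable (fun ω => Real.exp (t * G (fun i => Z (σ i) ω))) P :=
      fun σ => hexpInt t (m : ℝ) _ (hGσmeas σ) (fun ω => hGbound (fun i => Z (σ i) ω))
    have hUexpint : Integrable (fun ω => Real.exp ((m : ℝ) * t * U ω)) P :=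
      hexpInt ((m : ℝ) * t) 1 U hUmeas
        (fun ω => abs_le.mpr ⟨by linarith [(hU01 ω).1], (hU01 ω).2⟩)
    have hsummeas : Integrable (fun ω => ∑ σ : Equiv.Perm (Fin n),
        (n.factorial : ℝ)⁻¹ * Real.exp (t * G (fun i => Z (σ i) ω))) P :=
      integrable_finset_sum _ (fun σ _ => (hGσint σ).const_mul _)
    have hTσ : ∀ σ : Equiv.Perm (Fin n),
        ∫ ω, Real.exp (t * G (fun i => Z (σ i) ω)) ∂P
          = ∫ y, Real.exp (t * G y) ∂(Measure.pi fun _ : Fin n => ν) :=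
      fun σ => auxUQ_transfer hZmeas hindep hlaw σ.injective (hGmeas.const_mul t).exp
    have hTid : ∫ ω, Real.exp (t * G (fun i => Z i ω)) ∂P
        = ∫ y, Real.exp (t * G y) ∂(Measure.pi fun _ : Fin n => ν) :=
      auxUQ_transfer hZmeas hindep hlaw (fun i i' h => h : Function.Injective (id : Fin n → Fin n))
        (hGmeas.const_mul t).exp
    calc ∫ ω, Real.exp ((m : ℝ) * t * U ω) ∂P
        ≤ ∫ ω, ∑ σ : Equiv.Perm (Fin n),
            (n.factorial : ℝ)⁻¹ * Real.exp (t * G (fun i => Z (σ i) ω)) ∂P :=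
          integral_mono hUexpint hsummeas (fun ω => hJensen t ω)
      _ = ∑ σ : Equiv.Perm (Fin n),
            (n.factorial : ℝ)⁻¹ * ∫ ω, Real.exp (t * G (fun i => Z (σ i) ω)) ∂P := by
          rw [integral_finset_sum _ (fun σ _ => (hGσint σ).const_mul _)]
          exact Finset.sum_congr rfl fun σ _ => integral_const_mul _ _
      _ = ∑ _σ : Equiv.Perm (Fin n),
            (n.factorial : ℝ)⁻¹ * ∫ y, Real.exp (t * G y) ∂(Measure.pi fun _ : Fin n => ν) :=
          Finset.sum_congr rfl fun σ _ => by rw [hTσ σ]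
      _ = ∫ y, Real.exp (t * G y) ∂(Measure.pi fun _ : Fin n => ν) := by
          rw [Finset.sum_const, Finset.card_univ, Fintype.card_perm, Fintype.card_fin,
            nsmul_eq_mul, ← mul_assoc, mul_inv_cancel₀ hnfac_ne, one_mul]
      _ = ∫ ω, Real.exp (t * G (fun i => Z i ω)) ∂P := hTid.symm
      _ = ∫ ω, Real.exp (t * ∑ j : Fin m, φ (fun i => Z (b j i) ω)) ∂P := rfl
  -- Step 2: block factorization
  have hfact : ∀ (t : ℝ) (s : Finset (Fin m)),
      ∫ ω, Real.exp (t * ∑ j ∈ s, φ (fun i => Z (b j i) ω)) ∂P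
        = ∏ j ∈ s, ∫ ω, Real.exp (t * φ (fun i => Z (b j i) ω)) ∂P := by
    intro t s
    induction s using Finset.induction_on with
    | empty => simp
    | @insert j s hjs ih =>
      have hS : ∀ i : Fin k, b j i ∈ Finset.image (b j) Finset.univ :=
        fun i => Finset.mem_image_of_mem _ (Finset.mem_univ i)
      have hT : ∀ (j' : Fin m), j' ∈ s → ∀ (i : Fin k),
          b j' i ∈ s.biUnion (fun j'' => Finset.image (b j'') Finset.univ) :=
        fun j' hj' i => Finset.mem_biUnion.mpr ⟨j', hj', Finset.mem_image_of_mem _ (Finset.mem_univ i)⟩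
      have hST : Disjoint (Finset.image (b j) Finset.univ)
          (s.biUnion (fun j'' => Finset.image (b j'') Finset.univ)) := by
        rw [Finset.disjoint_left]
        intro a haS haT
        obtain ⟨i, _, rfl⟩ := Finset.mem_image.mp haS
        obtain ⟨j', hj', hmem⟩ := Finset.mem_biUnion.mp haT
        obtain ⟨i', _, heq⟩ := Finset.mem_image.mp hmem
        exact hjs ((hbdisj j' j i' i heq) ▸ hj')
      have h0 := hindep.indepFun_finset _ _ hST hZmeas
      have hf1 : Measurable (fun v : ((Finset.image (b j) Finset.univ : Finset (Fin n)) → 𝒵) =>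
          φ (fun i => v ⟨b j i, hS i⟩)) :=
        hφmeas.comp (measurable_pi_lambda _ fun i => measurable_pi_apply _)
      have hf2 : Measurable (fun v : ((s.biUnion (fun j'' => Finset.image (b j'') Finset.univ)
            : Finset (Fin n)) → 𝒵) =>
          ∑ j' ∈ s.attach, φ (fun i => v ⟨b j'.1 i, hT j'.1 j'.2 i⟩)) :=
        Finset.measurable_sum _ (fun j' _ =>
          hφmeas.comp (measurable_pi_lambda _ fun i => measurable_pi_apply _))
      have hIndep2 : IndepFun (fun ω => φ (fun i => Z (b j i) ω))
          (fun ω => ∑ j' ∈ s, φ (fun i => Z (b j' i) ω)) P := by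
        have hcomp := h0.comp hf1 hf2
        have he1 : (fun v : ((Finset.image (b j) Finset.univ : Finset (Fin n)) → 𝒵) =>
              φ (fun i => v ⟨b j i, hS i⟩)) ∘ (fun ω (i : (Finset.image (b j) Finset.univ
                : Finset (Fin n))) => Z i ω)
            = fun ω => φ (fun i => Z (b j i) ω) := rfl
        have he2 : (fun v : ((s.biUnion (fun j'' => Finset.image (b j'') Finset.univ)
              : Finset (Fin n)) → 𝒵) =>
              ∑ j' ∈ s.attach, φ (fun i => v ⟨b j'.1 i, hT j'.1 j'.2 i⟩))
            ∘ (fun ω (i : (s.biUnion (fun j'' => Finset.image (b j'') Finset.univ)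
                : Finset (Fin n))) => Z i ω)
            = fun ω => ∑ j' ∈ s, φ (fun i => Z (b j' i) ω) := by
          funext ω
          simp only [Function.comp_apply]
          rw [← Finset.sum_attach s (fun j' => φ (fun i => Z (b j' i) ω))]
        rw [← he1, ← he2]
        exact hcomp
      have hIndep3 : IndepFun (fun ω => Real.exp (t * φ (fun i => Z (b j i) ω)))
          (fun ω => Real.exp (t * ∑ j' ∈ s, φ (fun i => Z (b j' i) ω))) P :=
        hIndep2.comp (measurable_id.const_mul t).exp (measurable_id.const_mul t).exp
      have hmeas1 : AEStronglyMeasurable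
          (fun ω => Real.exp (t * φ (fun i => Z (b j i) ω))) P :=
        (((hWmeas j).const_mul t).exp).aestronglyMeasurable
      have hmeas2 : AEStronglyMeasurable
          (fun ω => Real.exp (t * ∑ j' ∈ s, φ (fun i => Z (b j' i) ω))) P :=
        (((Finset.measurable_sum _ (fun j' _ => hWmeas j')).const_mul t).exp).aestronglyMeasurable
      calc ∫ ω, Real.exp (t * ∑ j' ∈ insert j s, φ (fun i => Z (b j' i) ω)) ∂P
          = ∫ ω, Real.exp (t * φ (fun i => Z (b j i) ω))
              * Real.exp (t * ∑ j' ∈ s, φ (fun i => Z (b j' i) ω)) ∂P := by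
            refine integral_congr_ae (ae_of_all _ fun ω => ?_)
            simp only [Finset.sum_insert hjs, mul_add, Real.exp_add]
        _ = (∫ ω, Real.exp (t * φ (fun i => Z (b j i) ω)) ∂P)
              * ∫ ω, Real.exp (t * ∑ j' ∈ s, φ (fun i => Z (b j' i) ω)) ∂P :=
            hIndep3.integral_mul_eq_mul_integral hmeas1 hmeas2
        _ = ∏ j' ∈ insert j s, ∫ ω, Real.exp (t * φ (fun i => Z (b j' i) ω)) ∂P := by
            rw [ih, Finset.prod_insert hjs]
  -- each block factor equals the kernel mgf
  have hblockmgf : ∀ (t : ℝ) (j : Fin m),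
      ∫ ω, Real.exp (t * φ (fun i => Z (b j i) ω)) ∂P = ∫ v, Real.exp (t * φ v) ∂πk :=
    fun t j => auxUQ_transfer hZmeas hindep hlaw (hbinj j) (hφmeas.const_mul t).exp
  -- kernel mgf bound
  have hπkprob : IsProbabilityMeasure πk := by
    rw [hπkdef]
    infer_instance
  have hkernel : ∀ t : ℝ, ∫ v, Real.exp (t * φ v) ∂πk ≤ 1 - c + c * Real.exp t := by
    intro t
    have hpt : ∀ v, Real.exp (t * φ v) ≤ 1 - φ v + φ v * Real.exp t := by
      intro v
      obtain ⟨h0, h1⟩ := hφ01 v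
      have h := convexOn_exp.2 (Set.mem_univ (0:ℝ)) (Set.mem_univ t)
        (by linarith : (0:ℝ) ≤ 1 - φ v) h0 (by ring)
      simp only [smul_eq_mul, mul_zero, zero_add, Real.exp_zero, mul_one] at h
      rw [mul_comm]
      exact h
    have hint1 : Integrable (fun v => Real.exp (t * φ v)) πk := by
      refine ⟨((hφmeas.const_mul t).exp).aestronglyMeasurable,
        HasFiniteIntegral.of_bounded (C := Real.exp |t|) (ae_of_all _ fun v => ?_)⟩
      rw [Real.norm_eq_abs, Real.abs_exp]
      apply Real.exp_le_exp.mpr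
      obtain ⟨h0, h1⟩ := hφ01 v
      calc t * φ v ≤ |t * φ v| := le_abs_self _
        _ = |t| * |φ v| := abs_mul _ _
        _ ≤ |t| * 1 := mul_le_mul_of_nonneg_left (abs_le.mpr ⟨by linarith, h1⟩) (abs_nonneg t)
        _ = |t| := mul_one _
    have hφint : Integrable φ πk := by
      refine ⟨hφmeas.aestronglyMeasurable,
        HasFiniteIntegral.of_bounded (C := 1) (ae_of_all _ fun v => ?_)⟩
      obtain ⟨h0, h1⟩ := hφ01 v
      rw [Real.norm_eq_abs, abs_le]
      exact ⟨by linarith, h1⟩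
    have hsub : Integrable (fun v => 1 - φ v) πk := (integrable_const (1:ℝ)).sub hφint
    have hmulc : Integrable (fun v => φ v * Real.exp t) πk := hφint.mul_const _
    have hint2 : Integrable (fun v => 1 - φ v + φ v * Real.exp t) πk := hsub.add hmulc
    calc ∫ v, Real.exp (t * φ v) ∂πk ≤ ∫ v, (1 - φ v + φ v * Real.exp t) ∂πk :=
        integral_mono hint1 hint2 hpt
      _ = 1 - c + c * Real.exp t := by
        rw [integral_add hsub hmulc, integral_sub (integrable_const (1:ℝ)) hφint,
          integral_const, integral_mul_const, ← hcdef]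
        simp [measure_univ]
    -- product of kernel mgfs bounds the mgf of U
  have hMnonneg : ∀ t : ℝ, 0 ≤ ∫ v, Real.exp (t * φ v) ∂πk :=
    fun t => integral_nonneg fun v => (Real.exp_pos _).le
  have hmgf : ∀ t : ℝ, ∫ ω, Real.exp ((m : ℝ) * t * U ω) ∂P
      ≤ (1 - μ0 + μ0 * Real.exp t) ^ m := by
    intro t
    calc ∫ ω, Real.exp ((m : ℝ) * t * U ω) ∂P
        ≤ ∫ ω, Real.exp (t * ∑ j : Fin m, φ (fun i => Z (b j i) ω)) ∂P := hstep1 t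
      _ = ∏ j : Fin m, ∫ ω, Real.exp (t * φ (fun i => Z (b j i) ω)) ∂P := hfact t Finset.univ
      _ = (∫ v, Real.exp (t * φ v) ∂πk) ^ m := by
          rw [Finset.prod_congr rfl (fun j _ => hblockmgf t j), Finset.prod_const,
            Finset.card_univ, Fintype.card_fin]
      _ ≤ (1 - μ0 + μ0 * Real.exp t) ^ m := by
          rw [hμ0c]
          exact pow_le_pow_left₀ (hMnonneg t) (hkernel t) m
  rcases le_or_gt μ0 x with hge | hlt
  · -- trivial case `x ≥ μ0`
    have hmin : min x μ0 = μ0 := min_eq_right hge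
    rw [hmin]
    have hh1 : TransferUQ.h1 μ0 μ0 = 0 := by
      simp only [TransferUQ.h1]
      rw [if_neg (ne_of_gt hμ0pos), if_neg (ne_of_lt hμ0lt),
        div_self (ne_of_gt hμ0pos), div_self (by linarith : (1:ℝ) - μ0 ≠ 0), Real.log_one,
        mul_zero, mul_zero, add_zero]
    rw [hh1, mul_zero, Real.exp_zero, ENNReal.ofReal_one]
    exact prob_le_one
  · -- main case `x < μ0`
    have hmin : min x μ0 = x := min_eq_left hlt.le
    rw [hmin]
    set s := Real.log (x * (1 - μ0) / (μ0 * (1 - x))) with hsdef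
    have hμ0ne : μ0 ≠ 0 := ne_of_gt hμ0pos
    have h1x_pos : (0:ℝ) < 1 - x := by linarith
    have h1μ0_pos : (0:ℝ) < 1 - μ0 := by linarith
    have hd_pos : (0:ℝ) < μ0 * (1 - x) := mul_pos hμ0pos h1x_pos
    have hnum_pos : (0:ℝ) < x * (1 - μ0) := mul_pos hxpos h1μ0_pos
    have harg_pos : 0 < x * (1 - μ0) / (μ0 * (1 - x)) := div_pos hnum_pos hd_pos
    have harg_lt1 : x * (1 - μ0) / (μ0 * (1 - x)) < 1 := by
      rw [div_lt_one hd_pos]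
      nlinarith
    have hs_neg : s < 0 := Real.log_neg harg_pos harg_lt1
    have hexp_s : Real.exp s = x * (1 - μ0) / (μ0 * (1 - x)) := Real.exp_log harg_pos
    have hval : 1 - μ0 + μ0 * Real.exp s = (1 - μ0) / (1 - x) := by
      rw [hexp_s]
      field_simp
      ring
    have hval_pos : (0:ℝ) < (1 - μ0) / (1 - x) := div_pos h1μ0_pos h1x_pos
    have hUint : Integrable (fun ω => Real.exp (((m:ℝ) * s) * U ω)) P :=
      hexpInt _ 1 U hUmeas (fun ω => abs_le.mpr ⟨by linarith [(hU01 ω).1], (hU01 ω).2⟩)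
    have hts : (m:ℝ) * s ≤ 0 := mul_nonpos_of_nonneg_of_nonpos (Nat.cast_nonneg m) hs_neg.le
    have hcher := measure_le_le_exp_mul_mgf (μ := P) (X := U) x hts hUint
    have hmgfU : mgf U P ((m:ℝ)*s) = ∫ ω, Real.exp ((m:ℝ) * s * U ω) ∂P := rfl
    have hreal : (P {ω | U ω ≤ x}).toReal
        ≤ Real.exp (-(m:ℝ) * TransferUQ.h1 x μ0) := by
      have h2 : Real.exp (-((m:ℝ)*s) * x) * mgf U P ((m:ℝ)*s)
          ≤ Real.exp (-((m:ℝ)*s) * x) * ((1 - μ0) / (1 - x)) ^ m := by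
        refine mul_le_mul_of_nonneg_left ?_ (Real.exp_pos _).le
        rw [hmgfU, ← hval]
        exact hmgf s
      have h3 : Real.exp (-((m:ℝ)*s) * x) * ((1 - μ0) / (1 - x)) ^ m
          = Real.exp (-(m:ℝ) * TransferUQ.h1 x μ0) := by
        rw [← Real.exp_log hval_pos, ← Real.exp_nat_mul, ← Real.exp_add]
        congr 1
        have hlx : Real.log (x * (1 - μ0) / (μ0 * (1 - x)))
            = Real.log x + Real.log (1 - μ0) - (Real.log μ0 + Real.log (1 - x)) := by
          rw [Real.log_div (ne_of_gt hnum_pos) (ne_of_gt hd_pos),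
            Real.log_mul (ne_of_gt hxpos) (ne_of_gt h1μ0_pos),
            Real.log_mul hμ0ne (ne_of_gt h1x_pos)]
        have hh1x : TransferUQ.h1 x μ0
            = x * (Real.log x - Real.log μ0)
              + (1 - x) * (Real.log (1 - x) - Real.log (1 - μ0)) := by
          simp only [TransferUQ.h1]
          rw [if_neg (ne_of_gt hxpos), if_neg (ne_of_lt hxlt),
            Real.log_div (ne_of_gt hxpos) hμ0ne,
            Real.log_div (ne_of_gt h1x_pos) (ne_of_gt h1μ0_pos)]
        rw [hh1x, hsdef, hlx, Real.log_div (ne_of_gt h1μ0_pos) (ne_of_gt h1x_pos)]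
        ring
      calc (P {ω | U ω ≤ x}).toReal
          ≤ Real.exp (-((m:ℝ)*s) * x) * mgf U P ((m:ℝ)*s) := hcher
        _ ≤ Real.exp (-((m:ℝ)*s) * x) * ((1 - μ0) / (1 - x)) ^ m := h2
        _ = Real.exp (-(m:ℝ) * TransferUQ.h1 x μ0) := h3
    calc P {ω | U ω ≤ x} = ENNReal.ofReal (P {ω | U ω ≤ x}).toReal :=
        (ENNReal.ofReal_toReal (measure_ne_top _ _)).symm
      _ ≤ ENNReal.ofReal (Real.exp (-(m:ℝ) * TransferUQ.h1 x μ0)) :=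
        ENNReal.ofReal_le_ofReal hreal
end

section
/- (Jensen comparison of a U-statistic with its independent-block average.) Let ψ : ℝ → ℝ be a convex function. Then E[ ψ(U) ] ≤ E[ ψ( W ) ], where W = (1/m) · Σ_{j=1}^{m} φ( Z_{(j−1)k+1}, …, Z_{jk} ) is the average of the kernel over the first m disjoint consecutive blocks of k of the variables Z_1,…,Z_n. -/
open MeasureTheory ProbabilityTheory

/-- For `j < ⌊n/k⌋` and `i < k`, the (0-based) index `j·k + i` of the `i`-th element of the
`j`-th consecutive block of `k` indices is less than `n`. -/
theorem TransferUQ.block_index_lt {n k : ℕ} (j : Fin (n / k)) (i : Fin k) :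
    j.val * k + i.val < n := by
  have h1 : j.val * k + i.val < (j.val + 1) * k := by
    rw [Nat.succ_mul]; omega
  have h2 : (j.val + 1) * k ≤ (n / k) * k := Nat.mul_le_mul_right k j.isLt
  exact lt_of_lt_of_le h1 (le_trans h2 (Nat.div_mul_le_self n k))

namespace TransferUQ

def blk {n k : ℕ} (j : Fin (n / k)) (i : Fin k) : Fin n :=
  ⟨j.val * k + i.val, block_index_lt j i⟩

lemma blk_inj {n k : ℕ} (j : Fin (n / k)) : Function.Injective (blk (n := n) j) := by
  intro a b h
  have := congrArg Fin.val h
  simp only [blk] at this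
  exact Fin.ext (by omega)

lemma card_ext {n k : ℕ} {e g : Fin k → Fin n} (he : Function.Injective e)
    (hg : Function.Injective g) :
    Fintype.card {σ : Equiv.Perm (Fin n) // ∀ i, σ (e i) = g i} = (n - k).factorial := by
  classical
  let e₀ : Set.range e ≃ Set.range g :=
    (Equiv.ofInjective e he).symm.trans (Equiv.ofInjective g hg)
  have h1 : {σ : Equiv.Perm (Fin n) // ∀ i, σ (e i) = g i} ≃
      {σ : Fin n ≃ Fin n // ∀ x : Set.range e, σ x = e₀ x} := by
    refine Equiv.subtypeEquivRight fun σ => ?_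
    constructor
    · rintro h ⟨x, i, rfl⟩
      simp [e₀, h i]
    · intro h i
      have := h ⟨e i, Set.mem_range_self i⟩
      simpa [e₀] using this
  rw [Fintype.card_congr (h1.trans (Equiv.Set.compl e₀))]
  have hce : Fintype.card (↥(Set.range e)ᶜ) = n - k := by
    rw [Fintype.card_compl_set, Set.card_range_of_injective he] ; simp
  have hcg : Fintype.card (↥(Set.range g)ᶜ) = n - k := by
    rw [Fintype.card_compl_set, Set.card_range_of_injective hg] ; simp
  rw [Fintype.card_equiv (Fintype.equivOfCardEq (hce.trans hcg.symm)), hce]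

lemma sum_perm {n k : ℕ} (e : Fin k → Fin n) (he : Function.Injective e) (F : Tup k n → ℝ) :
    ∑ σ : Equiv.Perm (Fin n), F ⟨fun i => σ (e i), fun a b h => he (σ.injective h)⟩
      = ((n - k).factorial : ℝ) * ∑ g : Tup k n, F g := by
  classical
  set q : Equiv.Perm (Fin n) → Tup k n :=
    fun σ => ⟨fun i => σ (e i), fun a b h => he (σ.injective h)⟩ with hq
  have := Finset.sum_fiberwise_of_maps_to' (s := (Finset.univ : Finset (Equiv.Perm (Fin n))))
    (t := (Finset.univ : Finset (Tup k n))) (g := q) (fun _ _ => Finset.mem_univ _) F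
  rw [← this, Finset.mul_sum]
  refine Finset.sum_congr rfl fun g _ => ?_
  rw [Finset.sum_const, nsmul_eq_mul]
  congr 1
  have : (Finset.univ.filter fun σ => q σ = g).card
      = Fintype.card {σ : Equiv.Perm (Fin n) // ∀ i, σ (e i) = g.val i} := by
    rw [Fintype.card_subtype]
    congr 1
    ext σ
    simp only [hq, Subtype.ext_iff, funext_iff]
  rw [this, card_ext he g.2]

lemma hoeffding {n k : ℕ} (F : Tup k n → ℝ) :
    ∑ σ : Equiv.Perm (Fin n), ∑ j : Fin (n / k),
        F ⟨fun i => σ (blk j i), fun a b h => blk_inj j (σ.injective h)⟩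
      = ((n / k : ℕ) : ℝ) * ((n - k).factorial : ℝ) * ∑ g : Tup k n, F g := by
  rw [Finset.sum_comm]
  have : ∀ j : Fin (n / k), ∑ σ : Equiv.Perm (Fin n),
      F ⟨fun i => σ (blk j i), fun a b h => blk_inj j (σ.injective h)⟩
      = ((n - k).factorial : ℝ) * ∑ g : Tup k n, F g :=
    fun j => sum_perm (blk j) (blk_inj j) F
  rw [Finset.sum_congr rfl fun j _ => this j, Finset.sum_const]
  simp [nsmul_eq_mul, mul_assoc]

end TransferUQ

section
variable {Ω : Type*} [MeasurableSpace Ω] (P : Measure Ω) [IsProbabilityMeasure P]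
  {𝒵 : Type*} [MeasurableSpace 𝒵] (ν : Measure 𝒵) [IsProbabilityMeasure ν]

lemma TransferUQ.map_joint_eq_pi {n : ℕ} (Z : Fin n → Ω → 𝒵) (hZmeas : ∀ i, Measurable (Z i))
    (hindep : iIndepFun Z P) (hlaw : ∀ i, P.map (Z i) = ν) :
    P.map (fun ω i => Z i ω) = Measure.pi (fun _ : Fin n => ν) := by
  have hJ : Measurable (fun ω i => Z i ω) := measurable_pi_lambda _ hZmeas
  refine (Measure.pi_eq (μ := fun _ : Fin n => ν) fun s hs => ?_).symm
  rw [Measure.map_apply hJ (MeasurableSet.univ_pi hs)]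
  have hpre : (fun ω i => Z i ω) ⁻¹' Set.pi Set.univ s = ⋂ i, Z i ⁻¹' s i := by
    ext ω; simp [Set.mem_pi]
  rw [hpre]
  have h := hindep.measure_inter_preimage_eq_mul (S := Finset.univ) (sets := s)
    (fun i _ => hs i)
  simp only [Finset.mem_univ, Set.iInter_true, Set.iInter_coe_set] at h
  rw [h]
  exact Finset.prod_congr rfl fun i _ => by
    rw [← hlaw i, Measure.map_apply (hZmeas i) (hs i)]

lemma TransferUQ.perm_integral_eq {n : ℕ} (σ : Equiv.Perm (Fin n))
    (G : (Fin n → 𝒵) → ℝ) :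
    ∫ x, G (x ∘ σ) ∂(Measure.pi (fun _ : Fin n => ν))
      = ∫ x, G x ∂(Measure.pi (fun _ : Fin n => ν)) := by
  have h := (measurePreserving_piCongrLeft (fun _ : Fin n => ν) σ.symm).integral_comp' G
  have hfun : ∀ x : Fin n → 𝒵,
      (MeasurableEquiv.piCongrLeft (fun _ : Fin n => 𝒵) σ.symm) x = x ∘ σ := by
    intro x
    funext j
    have := Equiv.piCongrLeft_apply_apply (P := fun _ : Fin n => 𝒵) (e := σ.symm) x (σ j)
    simpa [MeasurableEquiv.coe_piCongrLeft] using this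
  simp_rw [hfun] at h
  exact h
end


/-- **Jensen comparison of a U-statistic with its independent-block average.** If `Z_1,…,Z_n`
are i.i.d., `φ` takes values in `[0,1]`, `U` is the U-statistic of degree `k` with kernel `φ`,
`m = ⌊n/k⌋`, and `W = (1/m) ∑_{j=1}^m φ(Z_{(j-1)k+1},…,Z_{jk})` is the average of the kernel
over the first `m` disjoint consecutive blocks of `k` variables, then for every convex
`ψ : ℝ → ℝ`, `E[ψ(U)] ≤ E[ψ(W)]`. -/
theorem ustatistic_jensen_block_average
    {Ω : Type*} [MeasurableSpace Ω] (P : Measure Ω) [IsProbabilityMeasure P]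
    {𝒵 : Type*} [MeasurableSpace 𝒵] (ν : Measure 𝒵) [IsProbabilityMeasure ν]
    (n k : ℕ) (hk : 1 ≤ k) (hkn : k ≤ n)
    (Z : Fin n → Ω → 𝒵) (hZmeas : ∀ i, Measurable (Z i))
    (hindep : iIndepFun Z P)
    (hlaw : ∀ i, P.map (Z i) = ν)
    (φ : (Fin k → 𝒵) → ℝ) (hφmeas : Measurable φ) (hφ01 : ∀ v, φ v ∈ Set.Icc (0:ℝ) 1)
    (ψ : ℝ → ℝ) (hψ : ConvexOn ℝ Set.univ ψ) :
    (∫ ω, ψ (TransferUQ.Ustat n k φ Z ω) ∂P) ≤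
      ∫ ω, ψ ((1 / ((n / k : ℕ) : ℝ)) * ∑ j : Fin (n / k),
        φ (fun i : Fin k =>
          Z ⟨j.val * k + i.val, TransferUQ.block_index_lt j i⟩ ω)) ∂P := by
  classical
  have hm1 : 1 ≤ n / k := (Nat.one_le_div_iff (by omega)).mpr hkn
  have hmR : ((n / k : ℕ) : ℝ) ≠ 0 := Nat.cast_ne_zero.mpr (by omega)
  have hmpos : (0 : ℝ) < ((n / k : ℕ) : ℝ) := by
    exact_mod_cast Nat.pos_of_ne_zero (by omega)
  have hnf : ((n.factorial : ℕ) : ℝ) ≠ 0 := Nat.cast_ne_zero.mpr n.factorial_ne_zero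
  set W : Equiv.Perm (Fin n) → Ω → ℝ := fun σ ω =>
    (1 / ((n / k : ℕ) : ℝ)) * ∑ j : Fin (n / k),
      φ (fun i => Z (σ (TransferUQ.blk j i)) ω) with hWdef
  -- Hoeffding decomposition
  have hUW : ∀ ω, TransferUQ.Ustat n k φ Z ω
      = ∑ σ : Equiv.Perm (Fin n), (1 / (n.factorial : ℝ)) • W σ ω := by
    intro ω
    have hh : ∑ σ : Equiv.Perm (Fin n), ∑ j : Fin (n / k),
        φ (fun i => Z (σ (TransferUQ.blk j i)) ω)
        = ((n / k : ℕ) : ℝ) * ((n - k).factorial : ℝ)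
          * ∑ g : TransferUQ.Tup k n, φ (fun i => Z (g.val i) ω) :=
      TransferUQ.hoeffding (fun g => φ (fun i => Z (g.val i) ω))
    simp only [smul_eq_mul, hWdef]
    rw [← Finset.mul_sum, ← Finset.mul_sum, hh, TransferUQ.Ustat]
    field_simp
  have h1 : ∑ _σ : Equiv.Perm (Fin n), (1 / (n.factorial : ℝ)) = 1 := by
    rw [Finset.sum_const, nsmul_eq_mul, Finset.card_univ, Fintype.card_perm, Fintype.card_fin]
    field_simp
  have hW01 : ∀ σ ω, W σ ω ∈ Set.Icc (0 : ℝ) 1 := by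
    intro σ ω
    constructor
    · exact mul_nonneg (by positivity) (Finset.sum_nonneg fun j _ => (hφ01 _).1)
    · have hS : ∑ j : Fin (n / k), φ (fun i => Z (σ (TransferUQ.blk j i)) ω)
          ≤ ((n / k : ℕ) : ℝ) := by
        calc _ ≤ ∑ _j : Fin (n / k), (1 : ℝ) :=
              Finset.sum_le_sum fun j _ => (hφ01 _).2
          _ = ((n / k : ℕ) : ℝ) := by simp
      calc W σ ω ≤ (1 / ((n / k : ℕ) : ℝ)) * ((n / k : ℕ) : ℝ) :=
            mul_le_mul_of_nonneg_left hS (by positivity)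
        _ = 1 := one_div_mul_cancel hmR
  have hU01 : ∀ ω, TransferUQ.Ustat n k φ Z ω ∈ Set.Icc (0 : ℝ) 1 := by
    intro ω
    rw [hUW ω]
    constructor
    · exact Finset.sum_nonneg fun σ _ =>
        smul_nonneg (by positivity) (hW01 σ ω).1
    · calc ∑ σ : Equiv.Perm (Fin n), (1 / (n.factorial : ℝ)) • W σ ω
          ≤ ∑ _σ : Equiv.Perm (Fin n), (1 / (n.factorial : ℝ)) := by
            refine Finset.sum_le_sum fun σ _ => ?_
            rw [smul_eq_mul]
            exact mul_le_of_le_one_right (by positivity) (hW01 σ ω).2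
        _ = 1 := h1
  have hψc : Continuous ψ := continuousOn_univ.mp (hψ.continuousOn isOpen_univ)
  obtain ⟨C, hC⟩ := IsCompact.exists_bound_of_continuousOn isCompact_Icc
    (hψc.continuousOn (s := Set.Icc (0:ℝ) 1))
  have hint : ∀ f : Ω → ℝ, Measurable f → (∀ ω, f ω ∈ Set.Icc (0:ℝ) 1) →
      Integrable (fun ω => ψ (f ω)) P := by
    intro f hf hf01
    refine ⟨(hψc.measurable.comp hf).aestronglyMeasurable, ?_⟩
    exact HasFiniteIntegral.of_bounded (C := C)
      (Filter.Eventually.of_forall fun ω => hC _ (hf01 ω))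
  have hWmeas : ∀ σ, Measurable (W σ) := fun σ =>
    measurable_const.mul (Finset.measurable_sum _ fun j _ =>
      hφmeas.comp (measurable_pi_lambda _ fun i => hZmeas _))
  have hUmeas : Measurable (TransferUQ.Ustat n k φ Z) :=
    measurable_const.mul (Finset.measurable_sum _ fun g _ =>
      hφmeas.comp (measurable_pi_lambda _ fun i => hZmeas _))
  set G : (Fin n → 𝒵) → ℝ := fun x =>
    ψ ((1 / ((n / k : ℕ) : ℝ)) * ∑ j : Fin (n / k),
      φ (fun i => x (TransferUQ.blk j i))) with hGdef
  have hGmeas : Measurable G :=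
    hψc.measurable.comp (measurable_const.mul (Finset.measurable_sum _ fun j _ =>
      hφmeas.comp (measurable_pi_lambda _ fun i => measurable_pi_apply _)))
  have hJmeas : Measurable (fun ω i => Z i ω) := measurable_pi_lambda _ hZmeas
  have hμ : P.map (fun ω i => Z i ω) = Measure.pi (fun _ : Fin n => ν) :=
    TransferUQ.map_joint_eq_pi P ν Z hZmeas hindep hlaw
  have hint2 : ∀ σ : Equiv.Perm (Fin n),
      ∫ ω, ψ (W σ ω) ∂P = ∫ x, G x ∂(Measure.pi (fun _ : Fin n => ν)) := by
    intro σ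
    have e1 : (fun ω => ψ (W σ ω)) = fun ω => G ((fun i => Z i ω) ∘ σ) := by
      funext ω; simp [hGdef, hWdef, Function.comp]
    have hcomp : Measurable (fun x : Fin n → 𝒵 => x ∘ σ) :=
      measurable_pi_lambda _ fun j => measurable_pi_apply _
    rw [e1]
    calc ∫ ω, G ((fun i => Z i ω) ∘ σ) ∂P
        = ∫ x, G (x ∘ σ) ∂(P.map (fun ω i => Z i ω)) :=
          (integral_map hJmeas.aemeasurable
            ((hGmeas.comp hcomp).aestronglyMeasurable)).symm
      _ = ∫ x, G (x ∘ σ) ∂(Measure.pi fun _ : Fin n => ν) := by rw [hμ]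
      _ = ∫ x, G x ∂(Measure.pi fun _ : Fin n => ν) := TransferUQ.perm_integral_eq ν σ G
  calc (∫ ω, ψ (TransferUQ.Ustat n k φ Z ω) ∂P)
      ≤ ∫ ω, ∑ σ : Equiv.Perm (Fin n), (1 / (n.factorial : ℝ)) • ψ (W σ ω) ∂P := by
        refine integral_mono (hint _ hUmeas hU01)
          (integrable_finset_sum _ fun σ _ =>
            ((hint _ (hWmeas σ) (hW01 σ)).smul (1 / (n.factorial : ℝ)))) fun ω => ?_
        rw [hUW ω]
        exact hψ.map_sum_le (fun _ _ => by positivity) h1 (fun _ _ => trivial)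
    _ = ∑ σ : Equiv.Perm (Fin n), ∫ ω, (1 / (n.factorial : ℝ)) • ψ (W σ ω) ∂P :=
        integral_finset_sum _ fun σ _ =>
          ((hint _ (hWmeas σ) (hW01 σ)).smul (1 / (n.factorial : ℝ)))
    _ = ∑ σ : Equiv.Perm (Fin n), (1 / (n.factorial : ℝ)) • ∫ ω, ψ (W σ ω) ∂P :=
        Finset.sum_congr rfl fun σ _ => integral_smul _ _
    _ = ∑ _σ : Equiv.Perm (Fin n),
          (1 / (n.factorial : ℝ)) • ∫ x, G x ∂(Measure.pi (fun _ : Fin n => ν)) := by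
        exact Finset.sum_congr rfl fun σ _ => by rw [hint2 σ]
    _ = ∫ x, G x ∂(Measure.pi (fun _ : Fin n => ν)) := by
        rw [Finset.sum_const, Finset.card_univ, Fintype.card_perm, Fintype.card_fin,
          nsmul_eq_mul, smul_eq_mul, ← mul_assoc, mul_one_div, div_self hnf, one_mul]
    _ = ∫ ω, ψ (W 1 ω) ∂P := (hint2 1).symm
    _ = _ := by
        refine integral_congr_ae (Filter.Eventually.of_forall fun ω => ?_)
        simp [hWdef, TransferUQ.blk]
end
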